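/- In the NP-hardness reduction instance I' (obtained from an SMTI instance I by adding vertices z_i, z_i' with preferences z_i: u_i ≻ z_i', z_i': z_i, and prepending z_i to each u_i's list), if M' is a weakly popular matching in I' of size 2n − l, then I admits a weakly stable matching of size at least n − l. -/

import Mathlib

open Finset
open scoped Classical
noncomputable section

/-- A bipartite preference instance: bipartite (multi)graph `G=(U,W;E)` where each
edge `e` has endpoints `src e ∈ U`, `dst e ∈ W`, and every vertex has a preference
valuation over edges (only values on incident edges are relevant); the valuation of
being unmatched (`∅`) is `0`. -/
structure PrefInst (U W E : Type) where
  src : E → U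
  dst : E → W
  pU : U → E → ℝ
  pW : W → E → ℝ

namespace PrefInst

variable {U W E : Type} [DecidableEq U] [DecidableEq W] [DecidableEq E]

/-- `M` is a matching: no two distinct edges of `M` share an endpoint. -/
def IsMatching (I : PrefInst U W E) (M : Finset E) : Prop :=
  ∀ e ∈ M, ∀ f ∈ M, e ≠ f → I.src e ≠ I.src f ∧ I.dst e ≠ I.dst f

/-- The edge of `M` incident to `u ∈ U` (if any): `M(u)`. -/
def mU (I : PrefInst U W E) (M : Finset E) (u : U) : Option E :=
  (M.filter fun e => I.src e = u).toList.head?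

/-- The edge of `M` incident to `w ∈ W` (if any): `M(w)`. -/
def mW (I : PrefInst U W E) (M : Finset E) (w : W) : Option E :=
  (M.filter fun e => I.dst e = w).toList.head?

/-- Valuation by `u` of a possible partner edge, with `p_u(∅) = 0`. -/
def valU (I : PrefInst U W E) (u : U) : Option E → ℝ
  | none => 0
  | some e => I.pU u e

def valW (I : PrefInst U W E) (w : W) : Option E → ℝ
  | none => 0
  | some e => I.pW w e

/-- `M` is maximal: no edge can be added keeping it a matching. -/
def Maximal (I : PrefInst U W E) (M : Finset E) : Prop :=
  ∀ e ∉ M, ¬ I.IsMatching (insert e M)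

/-- Edge `e ∉ M` blocks `M` in the weak-stability sense: both endpoints strictly improve. -/
def Blocks (I : PrefInst U W E) (M : Finset E) (e : E) : Prop :=
  e ∉ M ∧ I.valU (I.src e) (I.mU M (I.src e)) < I.pU (I.src e) e ∧
    I.valW (I.dst e) (I.mW M (I.dst e)) < I.pW (I.dst e) e

/-- Weak stability: no blocking edge. -/
def WeaklyStable (I : PrefInst U W E) (M : Finset E) : Prop :=
  ∀ e, ¬ I.Blocks M e

/-- Edge `e ∉ M` γ-min blocks `M`: both endpoints improve by at least their γ-threshold. -/
def GBlocks (I : PrefInst U W E) (γU γW : E → ℝ) (M : Finset E) (e : E) : Prop :=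
  e ∉ M ∧ I.valU (I.src e) (I.mU M (I.src e)) + γU e ≤ I.pU (I.src e) e ∧
    I.valW (I.dst e) (I.mW M (I.dst e)) + γW e ≤ I.pW (I.dst e) e

/-- γ-min stability: no γ-min blocking edge. -/
def GMinStable (I : PrefInst U W E) (γU γW : E → ℝ) (M : Finset E) : Prop :=
  ∀ e, ¬ I.GBlocks γU γW M e

/-- Standard vote of `u` comparing `M` to `N`: `+1` if strictly better in `M`,
`-1` if strictly better in `N`, `0` on equal value. -/
def sVoteU (I : PrefInst U W E) (M N : Finset E) (u : U) : ℤ :=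
  if I.valU u (I.mU M u) = I.valU u (I.mU N u) then 0
  else if I.valU u (I.mU M u) < I.valU u (I.mU N u) then -1 else 1

def sVoteW (I : PrefInst U W E) (M N : Finset E) (w : W) : ℤ :=
  if I.valW w (I.mW M w) = I.valW w (I.mW N w) then 0
  else if I.valW w (I.mW M w) < I.valW w (I.mW N w) then -1 else 1

/-- Weak vote of `u`: `0` if same partner, `-1` on strict improvement in `N`,
`+1` otherwise (partner changed without strict improvement). -/
def wVoteU (I : PrefInst U W E) (M N : Finset E) (u : U) : ℤ :=
  if I.mU M u = I.mU N u then 0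
  else if I.valU u (I.mU M u) < I.valU u (I.mU N u) then -1 else 1

def wVoteW (I : PrefInst U W E) (M N : Finset E) (w : W) : ℤ :=
  if I.mW M w = I.mW N w then 0
  else if I.valW w (I.mW M w) < I.valW w (I.mW N w) then -1 else 1

/-- Super vote of `u`: `0` if same partner, `-1` if the new partner is weakly
preferred (and different), `+1` only on strict worsening. -/
def supVoteU (I : PrefInst U W E) (M N : Finset E) (u : U) : ℤ :=
  if I.mU M u = I.mU N u then 0
  else if I.valU u (I.mU M u) ≤ I.valU u (I.mU N u) then -1 else 1

def supVoteW (I : PrefInst U W E) (M N : Finset E) (w : W) : ℤ :=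
  if I.mW M w = I.mW N w then 0
  else if I.valW w (I.mW M w) ≤ I.valW w (I.mW N w) then -1 else 1

/-- γ-vote of `u`: `0` if same partner; `-1` if `p_u(N(u)) ≥ p_u(M(u)) + γ_{N(u)}^u`;
`+1` otherwise (partner changed without a γ-sized improvement). -/
def gVoteU (I : PrefInst U W E) (γU : E → ℝ) (M N : Finset E) (u : U) : ℤ :=
  if I.mU M u = I.mU N u then 0
  else match I.mU N u with
    | none => 1
    | some e => if I.valU u (I.mU M u) + γU e ≤ I.pU u e then -1 else 1

def gVoteW (I : PrefInst U W E) (γW : E → ℝ) (M N : Finset E) (w : W) : ℤ :=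
  if I.mW M w = I.mW N w then 0
  else match I.mW N w with
    | none => 1
    | some e => if I.valW w (I.mW M w) + γW e ≤ I.pW w e then -1 else 1

variable [Fintype U] [Fintype W]

/-- Popularity (standard votes): `M` never loses a head-to-head comparison. -/
def Popular (I : PrefInst U W E) (M : Finset E) : Prop :=
  ∀ N, I.IsMatching N → 0 ≤ (∑ u, I.sVoteU M N u) + ∑ w, I.sVoteW M N w

/-- Weak popularity. -/
def WeaklyPopular (I : PrefInst U W E) (M : Finset E) : Prop :=
  ∀ N, I.IsMatching N → 0 ≤ (∑ u, I.wVoteU M N u) + ∑ w, I.wVoteW M N w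

/-- Super popularity. -/
def SuperPopular (I : PrefInst U W E) (M : Finset E) : Prop :=
  ∀ N, I.IsMatching N → 0 ≤ (∑ u, I.supVoteU M N u) + ∑ w, I.supVoteW M N w

/-- γ-popularity. -/
def GammaPopular (I : PrefInst U W E) (γU γW : E → ℝ) (M : Finset E) : Prop :=
  ∀ N, I.IsMatching N → 0 ≤ (∑ u, I.gVoteU γU M N u) + ∑ w, I.gVoteW γW M N w

end PrefInst
end

namespace PrefInst

variable {E : Type} [DecidableEq E] [Fintype E] {n : ℕ}

/-- The reduction instance `I'` built from an SMTI instance `I` on `U = W = Fin n`: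
for each `i` a new W-side agent `z_i` (preferring `u_i` to `z_i'`) and a new
U-side agent `z_i'` (accepting only `z_i`) are added; `u_i`'s list becomes `z_i`
followed by his original list (encoded by giving the new edge `(u_i,z_i)` value
strictly above all of `u_i`'s original values).  Edges: `inl e` are originals,
`inr (inl i) = (u_i, z_i)` and `inr (inr i) = (z_i', z_i)`. -/
noncomputable def redI (I : PrefInst (Fin n) (Fin n) E) :
    PrefInst (Fin n ⊕ Fin n) (Fin n ⊕ Fin n) (E ⊕ Fin n ⊕ Fin n) where
  src := Sum.elim (fun e => Sum.inl (I.src e)) (Sum.elim Sum.inl Sum.inr)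
  dst := Sum.elim (fun e => Sum.inl (I.dst e)) (Sum.elim Sum.inr Sum.inr)
  pU := fun v d =>
    match v, d with
    | Sum.inl i, Sum.inl e => I.pU i e
    | Sum.inl i, Sum.inr (Sum.inl j) => if i = j then 1 + ∑ e, I.pU i e else 0
    | Sum.inl _, Sum.inr (Sum.inr _) => 0
    | Sum.inr i, Sum.inr (Sum.inr j) => if i = j then 1 else 0
    | Sum.inr _, _ => 0
  pW := fun v d =>
    match v, d with
    | Sum.inl i, Sum.inl e => I.pW i e
    | Sum.inl _, _ => 0
    | Sum.inr i, Sum.inr (Sum.inl j) => if i = j then 2 else 0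
    | Sum.inr i, Sum.inr (Sum.inr j) => if i = j then 1 else 0
    | Sum.inr _, Sum.inl _ => 0

end PrefInst

namespace PrefInst
section AuxHelpers
variable {U W E : Type} [DecidableEq U] [DecidableEq W] [DecidableEq E]

-- ===== helpers =====
set_option linter.unusedSectionVars false

theorem valU_some (I : PrefInst U W E) (u : U) (e : E) : I.valU u (some e) = I.pU u e := rfl
theorem valW_some (I : PrefInst U W E) (w : W) (e : E) : I.valW w (some e) = I.pW w e := rfl
theorem valU_none (I : PrefInst U W E) (u : U) : I.valU u none = 0 := rfl
theorem valW_none (I : PrefInst U W E) (w : W) : I.valW w none = 0 := rfl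

theorem matching_update (I : PrefInst U W E) {M S T : Finset E} (hM : I.IsMatching M)
    (hT : I.IsMatching T)
    (hTS : ∀ t ∈ T, ∀ d ∈ M, d ∉ S → I.src d ≠ I.src t ∧ I.dst d ≠ I.dst t) :
    I.IsMatching ((M \ S) ∪ T) := by
  intro a ha b hb hab
  rw [mem_union, mem_sdiff] at ha hb
  rcases ha with ⟨haM, haS⟩ | haT <;> rcases hb with ⟨hbM, hbS⟩ | hbT
  · exact hM a haM b hbM hab
  · exact hTS b hbT a haM haS
  · obtain ⟨h1, h2⟩ := hTS a haT b hbM hbS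
    exact ⟨h1.symm, h2.symm⟩
  · exact hT a haT b hbT hab


theorem mU_eq_some (I : PrefInst U W E) {M : Finset E} (hM : I.IsMatching M)
    {e : E} (he : e ∈ M) {u : U} (hs : I.src e = u) : I.mU M u = some e := by
  have hf : M.filter (fun f => I.src f = u) = {e} := by
    ext d
    simp only [mem_filter, mem_singleton]
    constructor
    · rintro ⟨hd, hdu⟩
      by_contra hne
      exact (hM d hd e he hne).1 (hdu.trans hs.symm)
    · rintro rfl; exact ⟨he, hs⟩
  rw [mU, hf, Finset.toList_singleton]; rfl

theorem mW_eq_some (I : PrefInst U W E) {M : Finset E} (hM : I.IsMatching M)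
    {e : E} (he : e ∈ M) {w : W} (hs : I.dst e = w) : I.mW M w = some e := by
  have hf : M.filter (fun f => I.dst f = w) = {e} := by
    ext d
    simp only [mem_filter, mem_singleton]
    constructor
    · rintro ⟨hd, hdu⟩
      by_contra hne
      exact (hM d hd e he hne).2 (hdu.trans hs.symm)
    · rintro rfl; exact ⟨he, hs⟩
  rw [mW, hf, Finset.toList_singleton]; rfl

theorem mU_eq_none (I : PrefInst U W E) {M : Finset E} {u : U}
    (h : ∀ e ∈ M, I.src e ≠ u) : I.mU M u = none := by
  have hf : M.filter (fun f => I.src f = u) = ∅ := by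
    ext d; simp only [mem_filter, notMem_empty, iff_false, not_and]
    exact h d
  rw [mU, hf, Finset.toList_empty]; rfl

theorem mW_eq_none (I : PrefInst U W E) {M : Finset E} {w : W}
    (h : ∀ e ∈ M, I.dst e ≠ w) : I.mW M w = none := by
  have hf : M.filter (fun f => I.dst f = w) = ∅ := by
    ext d; simp only [mem_filter, notMem_empty, iff_false, not_and]
    exact h d
  rw [mW, hf, Finset.toList_empty]; rfl

theorem mU_mem (I : PrefInst U W E) {M : Finset E} {u : U} {e : E}
    (h : I.mU M u = some e) : e ∈ M ∧ I.src e = u := by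
  have : e ∈ M.filter (fun f => I.src f = u) := by
    rw [← Finset.mem_toList]
    rw [mU] at h
    exact List.mem_of_mem_head? (by rw [h]; rfl)
  simpa using this

theorem mW_mem (I : PrefInst U W E) {M : Finset E} {w : W} {e : E}
    (h : I.mW M w = some e) : e ∈ M ∧ I.dst e = w := by
  have : e ∈ M.filter (fun f => I.dst f = w) := by
    rw [← Finset.mem_toList]
    rw [mW] at h
    exact List.mem_of_mem_head? (by rw [h]; rfl)
  simpa using this

theorem mU_congr (I : PrefInst U W E) {M N : Finset E} {u : U}
    (h : M.filter (fun f => I.src f = u) = N.filter (fun f => I.src f = u)) :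
    I.mU M u = I.mU N u := by rw [mU, mU, h]

theorem mW_congr (I : PrefInst U W E) {M N : Finset E} {w : W}
    (h : M.filter (fun f => I.dst f = w) = N.filter (fun f => I.dst f = w)) :
    I.mW M w = I.mW N w := by rw [mW, mW, h]

theorem mU_update (I : PrefInst U W E) (M S T : Finset E) {u : U}
    (hS : ∀ d ∈ S, d ∈ M → I.src d ≠ u) (hT : ∀ d ∈ T, I.src d ≠ u) :
    I.mU ((M \ S) ∪ T) u = I.mU M u := by
  apply mU_congr
  ext d
  simp only [mem_filter, mem_union, mem_sdiff]
  constructor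
  · rintro ⟨hd | hd, hdu⟩
    · exact ⟨hd.1, hdu⟩
    · exact absurd hdu (hT d hd)
  · rintro ⟨hd, hdu⟩
    exact ⟨Or.inl ⟨hd, fun hs => hS d hs hd hdu⟩, hdu⟩

theorem mW_update (I : PrefInst U W E) (M S T : Finset E) {w : W}
    (hS : ∀ d ∈ S, d ∈ M → I.dst d ≠ w) (hT : ∀ d ∈ T, I.dst d ≠ w) :
    I.mW ((M \ S) ∪ T) w = I.mW M w := by
  apply mW_congr
  ext d
  simp only [mem_filter, mem_union, mem_sdiff]
  constructor
  · rintro ⟨hd | hd, hdu⟩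
    · exact ⟨hd.1, hdu⟩
    · exact absurd hdu (hT d hd)
  · rintro ⟨hd, hdu⟩
    exact ⟨Or.inl ⟨hd, fun hs => hS d hs hd hdu⟩, hdu⟩

theorem wVoteU_le_one (I : PrefInst U W E) (M N : Finset E) (u : U) :
    I.wVoteU M N u ≤ 1 := by
  rw [wVoteU]; split_ifs <;> norm_num

theorem wVoteW_le_one (I : PrefInst U W E) (M N : Finset E) (w : W) :
    I.wVoteW M N w ≤ 1 := by
  rw [wVoteW]; split_ifs <;> norm_num

theorem wVoteU_eq_zero (I : PrefInst U W E) {M N : Finset E} {u : U}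
    (h : I.mU M u = I.mU N u) : I.wVoteU M N u = 0 := by
  rw [wVoteU, if_pos h]

theorem wVoteW_eq_zero (I : PrefInst U W E) {M N : Finset E} {w : W}
    (h : I.mW M w = I.mW N w) : I.wVoteW M N w = 0 := by
  rw [wVoteW, if_pos h]

theorem wVoteU_eq_neg_one (I : PrefInst U W E) {M N : Finset E} {u : U}
    (h : I.valU u (I.mU M u) < I.valU u (I.mU N u)) : I.wVoteU M N u = -1 := by
  rw [wVoteU, if_neg, if_pos h]
  intro he; rw [he] at h; exact lt_irrefl _ h

theorem wVoteW_eq_neg_one (I : PrefInst U W E) {M N : Finset E} {w : W}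
    (h : I.valW w (I.mW M w) < I.valW w (I.mW N w)) : I.wVoteW M N w = -1 := by
  rw [wVoteW, if_neg, if_pos h]
  intro he; rw [he] at h; exact lt_irrefl _ h

theorem src_unique (I : PrefInst U W E) {M : Finset E} (hM : I.IsMatching M)
    {c d : E} (hc : c ∈ M) (hd : d ∈ M) (h : I.src c = I.src d) : c = d := by
  by_contra hne
  exact (hM c hc d hd hne).1 h

theorem dst_unique (I : PrefInst U W E) {M : Finset E} (hM : I.IsMatching M)
    {c d : E} (hc : c ∈ M) (hd : d ∈ M) (h : I.dst c = I.dst d) : c = d := by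
  by_contra hne
  exact (hM c hc d hd hne).2 h

/-- To contradict weak popularity of `M'`, it suffices to exhibit a matching `N`
that differs from `M'` only at vertices in `sU`/`sW` and wins there. -/
theorem popular_contra [Fintype U] [Fintype W] (I : PrefInst U W E)
    {M' N : Finset E} (hpop : I.WeaklyPopular M') (hN : I.IsMatching N)
    (sU : Finset U) (sW : Finset W)
    (hoffU : ∀ v ∉ sU, I.mU M' v = I.mU N v)
    (hoffW : ∀ v ∉ sW, I.mW M' v = I.mW N v)
    (hneg : (∑ v ∈ sU, I.wVoteU M' N v) + ∑ v ∈ sW, I.wVoteW M' N v < 0) : False := by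
  have h1 : ∑ v ∈ sU, I.wVoteU M' N v = ∑ v, I.wVoteU M' N v :=
    Finset.sum_subset (Finset.subset_univ _)
      (fun v _ hv => I.wVoteU_eq_zero (hoffU v hv))
  have h2 : ∑ v ∈ sW, I.wVoteW M' N v = ∑ v, I.wVoteW M' N v :=
    Finset.sum_subset (Finset.subset_univ _)
      (fun v _ hv => I.wVoteW_eq_zero (hoffW v hv))
  have := hpop N hN
  rw [← h1, ← h2] at this
  linarith

/-- Gale–Shapley via deletions: existence of a stable matching inside an edge set `A`
when preferences are strict (injective valuations) on both sides among edges of `A`. -/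
theorem exists_stable_aux (I : PrefInst U W E) (A : Finset E)
    (hU : ∀ e ∈ A, ∀ f ∈ A, I.src e = I.src f →
      I.pU (I.src e) e = I.pU (I.src f) f → e = f)
    (hW : ∀ e ∈ A, ∀ f ∈ A, I.dst e = I.dst f →
      I.pW (I.dst e) e = I.pW (I.dst f) f → e = f) :
    ∃ M, M ⊆ A ∧ I.IsMatching M ∧ ∀ e ∈ A, ¬ I.Blocks M e := by
  induction A using Finset.strongInduction with
  | _ A ih =>
  -- `P e`: `e` is the best positive edge at its `U`-endpoint
  set P : E → Prop := fun e => e ∈ A ∧ 0 < I.pU (I.src e) e ∧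
    ∀ f ∈ A, I.src f = I.src e → 0 < I.pU (I.src f) f →
      I.pU (I.src f) f ≤ I.pU (I.src e) e with hP
  by_cases hcase : ∃ e, P e ∧
      (A.filter fun g => I.dst g = I.dst e ∧ I.pW (I.dst e) g < I.pW (I.dst e) e).Nonempty
  · obtain ⟨e, hPe, hD⟩ := hcase
    set D := A.filter fun g => I.dst g = I.dst e ∧ I.pW (I.dst e) g < I.pW (I.dst e) e with hDdef
    have hDA : D ⊆ A := filter_subset _ _
    have hss : A \ D ⊂ A := Finset.sdiff_ssubset hDA hD
    have hsub : A \ D ⊆ A := sdiff_subset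
    obtain ⟨M, hMA, hmatch, hnb⟩ := ih (A \ D) hss
      (fun a ha b hb => hU a (hsub ha) b (hsub hb))
      (fun a ha b hb => hW a (hsub ha) b (hsub hb))
    refine ⟨M, hMA.trans hsub, hmatch, ?_⟩
    intro g hg hbl
    by_cases hgD : g ∈ D
    · -- a deleted edge cannot block
      rw [hDdef, mem_filter] at hgD
      obtain ⟨hgA, hgd, hgw⟩ := hgD
      have heA' : e ∈ A \ D := by
        rw [mem_sdiff, hDdef, mem_filter]
        exact ⟨hPe.1, fun h => lt_irrefl _ h.2.2⟩
      obtain ⟨hg1, hg2, hg3⟩ := hbl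
      rw [hgd] at hg3
      by_cases heM : e ∈ M
      · have hme := I.mW_eq_some hmatch heM rfl
        rw [hme] at hg3
        have hv : I.valW (I.dst e) (some e) = I.pW (I.dst e) e := rfl
        rw [hv] at hg3
        linarith
      · -- then `e` itself blocks `M` inside `A \ D`
        refine hnb e heA' ⟨heM, ?_, ?_⟩
        · rcases h : I.mU M (I.src e) with _ | f
          · exact hPe.2.1
          · obtain ⟨hfM, hfs⟩ := I.mU_mem h
            have hfA : f ∈ A := hMA.trans hsub hfM
            have hfe : f ≠ e := fun h' => heM (h' ▸ hfM)
            have hne : I.pU (I.src f) f ≠ I.pU (I.src e) e := by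
              intro h'
              exact hfe (hU f hfA e hPe.1 hfs (by rw [hfs]; rw [hfs] at h'; exact h'))
            show I.pU (I.src e) f < I.pU (I.src e) e
            by_cases hpos : 0 < I.pU (I.src f) f
            · have := hPe.2.2 f hfA hfs hpos
              rw [hfs] at this hne
              exact lt_of_le_of_ne this hne
            · push_neg at hpos
              rw [hfs] at hpos
              linarith [hPe.2.1]
        · calc I.valW (I.dst e) (I.mW M (I.dst e)) < I.pW (I.dst e) g := hg3
            _ < I.pW (I.dst e) e := hgw
    · exact hnb g (mem_sdiff.2 ⟨hg, hgD⟩) hbl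
  · push_neg at hcase
    -- no deletions possible: the set of top edges is a stable matching
    set M := A.filter P with hM
    have hMA : M ⊆ A := filter_subset _ _
    have hPmem : ∀ e ∈ M, P e := fun e he => (mem_filter.1 he).2
    have hmatch : I.IsMatching M := by
      intro a ha b hb hab
      have hPa := hPmem a ha; have hPb := hPmem b hb
      constructor
      · intro hsame
        apply hab
        apply hU a hPa.1 b hPb.1 hsame
        have h1 := hPa.2.2 b hPb.1 hsame.symm hPb.2.1
        have h2 := hPb.2.2 a hPa.1 hsame hPa.2.1
        rw [hsame] at *
        linarith
      · intro hsame
        have hne : I.pW (I.dst a) a ≠ I.pW (I.dst b) b := fun h' =>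
          hab (hW a hPa.1 b hPb.1 hsame h')
        rcases lt_trichotomy (I.pW (I.dst a) a) (I.pW (I.dst b) b) with h | h | h
        · rw [hsame] at h
          exact Finset.nonempty_iff_ne_empty.1 ⟨a, by rw [mem_filter]; exact ⟨hPa.1, hsame, h⟩⟩ (hcase b hPb)
        · exact hne h
        · rw [← hsame] at h
          exact Finset.nonempty_iff_ne_empty.1 ⟨b, by rw [mem_filter]; exact ⟨hPb.1, hsame.symm, h⟩⟩ (hcase a hPa)
    refine ⟨M, hMA, hmatch, ?_⟩
    intro g hg hbl
    obtain ⟨hgM, hbU, hbW⟩ := hbl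
    rcases h : I.mU M (I.src g) with _ | f
    · rw [h] at hbU
      have hpos : 0 < I.pU (I.src g) g := hbU
      -- the positive-top edge at `src g` exists and is in `M`
      have hne : (A.filter fun f => I.src f = I.src g ∧ 0 < I.pU (I.src f) f).Nonempty :=
        ⟨g, by rw [mem_filter]; exact ⟨hg, rfl, hpos⟩⟩
      obtain ⟨t, ht, htop⟩ := Finset.exists_max_image _ (fun f => I.pU (I.src f) f) hne
      rw [mem_filter] at ht
      have hPt : P t := by
        refine ⟨ht.1, ht.2.2, ?_⟩
        intro f hf hsf hpf
        exact htop f (by rw [mem_filter]; exact ⟨hf, by rw [hsf, ht.2.1], hpf⟩)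
      have : I.mU M (I.src g) = some t :=
        I.mU_eq_some hmatch (by rw [hM, mem_filter]; exact ⟨ht.1, hPt⟩) ht.2.1
      rw [h] at this; exact absurd this (by simp)
    · obtain ⟨hfM, hfs⟩ := I.mU_mem h
      have hPf := hPmem f hfM
      rw [h] at hbU
      have hval : I.valU (I.src g) (some f) = I.pU (I.src g) f := rfl
      rw [hval] at hbU
      have hposf : 0 < I.pU (I.src g) f := by
        have := hPf.2.1; rw [hfs] at this; exact this
      have hpos : 0 < I.pU (I.src g) g := lt_trans hposf hbU
      have hle := hPf.2.2 g hg hfs.symm hpos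
      rw [hfs] at hle
      linarith

/-- Existence of a weakly stable matching inside `A` when `U`-side preferences are strict,
by perturbing the `W`-side valuations into strict ones. -/
theorem exists_weaklyStable_on [Fintype W] [Fintype E] (I : PrefInst U W E) (A : Finset E)
    (hU : ∀ e ∈ A, ∀ f ∈ A, I.src e = I.src f →
      I.pU (I.src e) e = I.pU (I.src f) f → e = f) :
    ∃ M, M ⊆ A ∧ I.IsMatching M ∧ ∀ e ∈ A, ¬ I.Blocks M e := by
  classical
  set Nc : ℕ := Fintype.card E with hNc
  set ι : E → ℕ := fun e => ((Fintype.equivFin E) e : ℕ) with hι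
  have hι_inj : Function.Injective ι := by
    intro a b h
    exact (Fintype.equivFin E).injective (Fin.ext h)
  have hι_lt : ∀ e, ι e < Nc := fun e => ((Fintype.equivFin E) e).2
  set T : Finset ℝ := (Finset.univ.filter fun p : W × E × E =>
      I.pW p.1 p.2.1 < I.pW p.1 p.2.2).image
      fun p => I.pW p.1 p.2.2 - I.pW p.1 p.2.1 with hT
  set δ : ℝ := if h : T.Nonempty then T.min' h else 1 with hδ
  have hδpos : 0 < δ := by
    rw [hδ]
    split_ifs with h
    · obtain ⟨p, hp, hpe⟩ := Finset.mem_image.1 (T.min'_mem h)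
      rw [Finset.mem_filter] at hp
      rw [← hpe]
      linarith [hp.2]
    · norm_num
  have hδle : ∀ w e f, I.pW w e < I.pW w f → δ ≤ I.pW w f - I.pW w e := by
    intro w e f hlt
    have hmem : (I.pW w f - I.pW w e) ∈ T := by
      rw [hT]
      exact Finset.mem_image.2 ⟨⟨w, e, f⟩, Finset.mem_filter.2 ⟨Finset.mem_univ _, hlt⟩, rfl⟩
    have hTne : T.Nonempty := ⟨_, hmem⟩
    rw [hδ, dif_pos hTne]
    exact T.min'_le _ hmem
  set ε : ℝ := δ / (Nc + 1) with hε
  have hεpos : 0 < ε := div_pos hδpos (by positivity)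
  have hεδ : ε * (Nc + 1) = δ := div_mul_cancel₀ δ (by positivity)
  set q : W → E → ℝ := fun w e => I.pW w e + ε * (ι e) with hq
  have hp2 : ∀ w e f, I.pW w e < I.pW w f → q w e < q w f := by
    intro w e f hlt
    have h1 : (ι e : ℝ) ≤ Nc := by exact_mod_cast le_of_lt (hι_lt e)
    have h2 : (0:ℝ) ≤ (ι f : ℝ) := by positivity
    have h3 : δ ≤ I.pW w f - I.pW w e := hδle w e f hlt
    have h4 : ε * (ι e) ≤ ε * Nc := by
      apply mul_le_mul_of_nonneg_left h1 (le_of_lt hεpos)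
    have h5 : ε * (Nc:ℝ) < δ := by nlinarith
    have h6 : (0:ℝ) ≤ ε * (ι f) := by positivity
    rw [hq]
    dsimp only
    nlinarith
  have hp3 : ∀ w e, 0 < I.pW w e → 0 < q w e := by
    intro w e h
    have : (0:ℝ) ≤ ε * (ι e) := by positivity
    rw [hq]; dsimp only; linarith
  have hqinj : ∀ w e f, q w e = q w f → e = f := by
    intro w e f h
    rcases lt_trichotomy (I.pW w e) (I.pW w f) with hlt | heq | hlt
    · exact absurd h (ne_of_lt (hp2 w e f hlt))
    · rw [hq] at h
      dsimp only at h
      rw [heq] at h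
      have : (ι e : ℝ) = (ι f : ℝ) := mul_left_cancel₀ (ne_of_gt hεpos) (by linarith)
      exact hι_inj (by exact_mod_cast this)
    · exact absurd h.symm (ne_of_lt (hp2 w f e hlt))
  set I2 : PrefInst U W E := ⟨I.src, I.dst, I.pU, q⟩ with hI2
  obtain ⟨M, hMA, hmatch, hnb⟩ := I2.exists_stable_aux A hU
    (by
      intro e he f hf hd hv
      exact hqinj (I.dst e) e f (by rw [show I2.dst f = I2.dst e from hd.symm] at hv; exact hv))
  refine ⟨M, hMA, hmatch, ?_⟩
  intro e he hbl
  obtain ⟨h1, h2, h3⟩ := hbl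
  refine hnb e he ⟨h1, h2, ?_⟩
  show I2.valW (I.dst e) (I.mW M (I.dst e)) < q (I.dst e) e
  rcases hm : I.mW M (I.dst e) with _ | f
  · rw [hm] at h3
    exact hp3 _ _ h3
  · rw [hm] at h3
    exact hp2 _ f e h3

end AuxHelpers

section Red
set_option linter.unusedSectionVars false

variable {E : Type} [DecidableEq E] [Fintype E] {n : ℕ} (I : PrefInst (Fin n) (Fin n) E)

theorem redI_src_inl (f : E) : I.redI.src (Sum.inl f) = Sum.inl (I.src f) := by simp [redI]
theorem redI_src_zi (k : Fin n) : I.redI.src (Sum.inr (Sum.inl k)) = Sum.inl k := by simp [redI]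
theorem redI_src_zi' (k : Fin n) : I.redI.src (Sum.inr (Sum.inr k)) = Sum.inr k := by simp [redI]
theorem redI_dst_inl (f : E) : I.redI.dst (Sum.inl f) = Sum.inl (I.dst f) := by simp [redI]
theorem redI_dst_zi (k : Fin n) : I.redI.dst (Sum.inr (Sum.inl k)) = Sum.inr k := by simp [redI]
theorem redI_dst_zi' (k : Fin n) : I.redI.dst (Sum.inr (Sum.inr k)) = Sum.inr k := by simp [redI]

theorem redI_pU_inl (i : Fin n) (f : E) : I.redI.pU (Sum.inl i) (Sum.inl f) = I.pU i f := by simp [redI]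
theorem redI_pU_top (k : Fin n) :
    I.redI.pU (Sum.inl k) (Sum.inr (Sum.inl k)) = 1 + ∑ e, I.pU k e := by
  simp [redI]
theorem redI_pU_z (k : Fin n) : I.redI.pU (Sum.inr k) (Sum.inr (Sum.inr k)) = 1 := by
  simp [redI]
theorem redI_pW_inl (j : Fin n) (f : E) : I.redI.pW (Sum.inl j) (Sum.inl f) = I.pW j f := by simp [redI]
theorem redI_pW_z2 (k : Fin n) : I.redI.pW (Sum.inr k) (Sum.inr (Sum.inl k)) = 2 := by
  simp [redI]
theorem redI_pW_z1 (k : Fin n) : I.redI.pW (Sum.inr k) (Sum.inr (Sum.inr k)) = 1 := by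
  simp [redI]

theorem redI_src_eq_inl {d : E ⊕ Fin n ⊕ Fin n} {i : Fin n}
    (h : I.redI.src d = Sum.inl i) :
    (∃ f, d = Sum.inl f ∧ I.src f = i) ∨ d = Sum.inr (Sum.inl i) := by
  rcases d with f | k | k
  · exact Or.inl ⟨f, rfl, by simpa [redI_src_inl] using h⟩
  · right
    rw [redI_src_zi] at h
    simp_all
  · exact absurd h (by simp [redI_src_zi'])

theorem redI_src_eq_inr {d : E ⊕ Fin n ⊕ Fin n} {i : Fin n}
    (h : I.redI.src d = Sum.inr i) : d = Sum.inr (Sum.inr i) := by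
  rcases d with f | k | k
  · exact absurd h (by simp [redI_src_inl])
  · exact absurd h (by simp [redI_src_zi])
  · rw [redI_src_zi'] at h
    simp_all

theorem redI_dst_eq_inl {d : E ⊕ Fin n ⊕ Fin n} {j : Fin n}
    (h : I.redI.dst d = Sum.inl j) : ∃ f, d = Sum.inl f ∧ I.dst f = j := by
  rcases d with f | k | k
  · exact ⟨f, rfl, by simpa [redI_dst_inl] using h⟩
  · exact absurd h (by simp [redI_dst_zi])
  · exact absurd h (by simp [redI_dst_zi'])

theorem redI_dst_eq_inr {d : E ⊕ Fin n ⊕ Fin n} {k : Fin n}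
    (h : I.redI.dst d = Sum.inr k) :
    d = Sum.inr (Sum.inl k) ∨ d = Sum.inr (Sum.inr k) := by
  rcases d with f | m | m
  · exact absurd h (by simp [redI_dst_inl])
  · left
    rw [redI_dst_zi] at h
    simp_all
  · right
    rw [redI_dst_zi'] at h
    simp_all

end Red

section Key

variable {E : Type} [DecidableEq E] [Fintype E] {n : ℕ}

/-- Key popularity argument: any edge blocking the restriction `M0` of a weakly
popular matching `M'` of `I'` must have both endpoints unmatched in `M0`. -/
theorem redI_blocks_free (I : PrefInst (Fin n) (Fin n) E)
    (hpU : ∀ u e, 0 ≤ I.pU u e)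
    (M' : Finset (E ⊕ Fin n ⊕ Fin n))
    (hM' : I.redI.IsMatching M')
    (hpop : I.redI.WeaklyPopular M')
    (e : E)
    (hb : I.Blocks (univ.filter fun f => (Sum.inl f : E ⊕ Fin n ⊕ Fin n) ∈ M') e) :
    I.mU (univ.filter fun f => (Sum.inl f : E ⊕ Fin n ⊕ Fin n) ∈ M') (I.src e) = none ∧
      I.mW (univ.filter fun f => (Sum.inl f : E ⊕ Fin n ⊕ Fin n) ∈ M') (I.dst e) = none := by
  classical
  set M0 : Finset E := univ.filter (fun f => (Sum.inl f : E ⊕ Fin n ⊕ Fin n) ∈ M') with hM0def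
  have hmem0 : ∀ f : E, f ∈ M0 ↔ (Sum.inl f : E ⊕ Fin n ⊕ Fin n) ∈ M' := by
    intro f; simp [hM0def]
  have hM0match : I.IsMatching M0 := by
    intro a ha b hbm hab
    have h := hM' (Sum.inl a) ((hmem0 a).1 ha) (Sum.inl b) ((hmem0 b).1 hbm) (by simpa using hab)
    refine ⟨fun hs => h.1 ?_, fun hs => h.2 ?_⟩
    · rw [redI_src_inl, redI_src_inl, hs]
    · rw [redI_dst_inl, redI_dst_inl, hs]
  obtain ⟨heM0, hbU, hbW⟩ := hb
  have hinlE : (Sum.inl e : E ⊕ Fin n ⊕ Fin n) ∉ M' := fun h => heM0 ((hmem0 e).2 h)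
  have hlinkU : ∀ {i₀ : Fin n} {f : E}, I.mU M0 i₀ = some f →
      I.redI.mU M' (Sum.inl i₀) = some (Sum.inl f) := by
    intro i₀ f h
    obtain ⟨hfM, hfs⟩ := I.mU_mem h
    exact I.redI.mU_eq_some hM' ((hmem0 f).1 hfM) (by rw [redI_src_inl, hfs])
  have hlinkW : ∀ {j₀ : Fin n} {g : E}, I.mW M0 j₀ = some g →
      I.redI.mW M' (Sum.inl j₀) = some (Sum.inl g) := by
    intro j₀ g h
    obtain ⟨hgM, hgs⟩ := I.mW_mem h
    exact I.redI.mW_eq_some hM' ((hmem0 g).1 hgM) (by rw [redI_dst_inl, hgs])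
  have hnoneW : ∀ {j₀ : Fin n}, I.mW M0 j₀ = none →
      ∀ d ∈ M', I.redI.dst d ≠ Sum.inl j₀ := by
    intro j₀ h d hd hdst
    obtain ⟨f, rfl, hfj⟩ := I.redI_dst_eq_inl hdst
    have h2 : I.mW M0 j₀ = some f := I.mW_eq_some hM0match ((hmem0 f).2 hd) hfj
    rw [h] at h2; exact nomatch h2
  have hnoneU : ∀ {i₀ : Fin n}, I.mU M0 i₀ = none →
      ∀ d ∈ M', I.redI.src d = Sum.inl i₀ → d = Sum.inr (Sum.inl i₀) := by
    intro i₀ h d hd hds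
    rcases I.redI_src_eq_inl hds with ⟨f, rfl, hfi⟩ | rfl
    · have h2 : I.mU M0 i₀ = some f := I.mU_eq_some hM0match ((hmem0 f).2 hd) hfi
      rw [h] at h2; exact nomatch h2
    · rfl
  -- First: the U-endpoint of `e` is unmatched in `M0`.
  have hIfree : I.mU M0 (I.src e) = none := by
    rcases hmi : I.mU M0 (I.src e) with _ | f
    · rfl
    exfalso
    obtain ⟨hfM0, hfsrc⟩ := I.mU_mem hmi
    have hfe : f ≠ e := fun h => heM0 (h ▸ hfM0)
    rw [hmi] at hbU
    have hUlt : I.pU (I.src e) f < I.pU (I.src e) e := hbU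
    rcases hmj : I.mW M0 (I.dst e) with _ | g
    · -- Case 1c : `dst e` unmatched in `M0`
      rw [hmj] at hbW
      have hWpos : 0 < I.pW (I.dst e) e := hbW
      set S : Finset (E ⊕ Fin n ⊕ Fin n) := {Sum.inl f} with hS
      set T : Finset (E ⊕ Fin n ⊕ Fin n) := {Sum.inl e} with hT
      set N := (M' \ S) ∪ T with hN
      have hdstfne : I.dst f ≠ I.dst e := by
        intro h
        have h2 : I.mW M0 (I.dst e) = some f := I.mW_eq_some hM0match hfM0 h
        rw [hmj] at h2; exact nomatch h2
      have hTS : ∀ t ∈ T, ∀ d ∈ M', d ∉ S →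
          I.redI.src d ≠ I.redI.src t ∧ I.redI.dst d ≠ I.redI.dst t := by
        intro t ht d hd hdS
        rw [hT, mem_singleton] at ht
        subst ht
        constructor
        · intro hs
          rw [redI_src_inl] at hs
          have : d = Sum.inr (Sum.inl (I.src e)) ∨ d = Sum.inl f := by
            rcases I.redI_src_eq_inl hs with ⟨f', rfl, hf'⟩ | rfl
            · right
              have h2 : I.mU M0 (I.src e) = some f' :=
                I.mU_eq_some hM0match ((hmem0 f').2 hd) hf'
              rw [hmi] at h2
              rw [Option.some_inj.1 h2]
            · left; rfl
          rcases this with rfl | rfl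
          · -- but then `u_i` has two partners `inl f` and `z_i` in `M'`
            have h3 := I.redI.src_unique hM' hd ((hmem0 f).1 hfM0)
              (by rw [redI_src_zi, redI_src_inl, hfsrc])
            exact absurd h3 (by simp)
          · exact hdS (by rw [hS, mem_singleton])
        · intro hs
          rw [redI_dst_inl] at hs
          exact hnoneW hmj d hd hs
      have hNmatch : I.redI.IsMatching N := by
        refine I.redI.matching_update hM' ?_ hTS
        intro a ha b hbm hab
        rw [hT, mem_singleton] at ha hbm
        exact absurd (ha.trans hbm.symm) hab
      have hMi : I.redI.mU M' (Sum.inl (I.src e)) = some (Sum.inl f) := hlinkU hmi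
      have hNi : I.redI.mU N (Sum.inl (I.src e)) = some (Sum.inl e) :=
        I.redI.mU_eq_some hNmatch (mem_union_right _ (by rw [hT, mem_singleton])) (redI_src_inl I e)
      have hMj : I.redI.mW M' (Sum.inl (I.dst e)) = none :=
        I.redI.mW_eq_none (hnoneW hmj)
      have hNj : I.redI.mW N (Sum.inl (I.dst e)) = some (Sum.inl e) :=
        I.redI.mW_eq_some hNmatch (mem_union_right _ (by rw [hT, mem_singleton])) (redI_dst_inl I e)
      have vU : I.redI.wVoteU M' N (Sum.inl (I.src e)) = -1 := by
        apply wVoteU_eq_neg_one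
        rw [hMi, hNi, valU_some, valU_some, redI_pU_inl, redI_pU_inl]
        exact hUlt
      have vW : I.redI.wVoteW M' N (Sum.inl (I.dst e)) = -1 := by
        apply wVoteW_eq_neg_one
        rw [hMj, hNj, valW_none, valW_some, redI_pW_inl]
        exact hWpos
      refine I.redI.popular_contra hpop hNmatch
        {Sum.inl (I.src e)} {Sum.inl (I.dst e), Sum.inl (I.dst f)} ?_ ?_ ?_
      · intro v hv
        rw [mem_singleton] at hv
        symm
        apply I.redI.mU_update
        · intro d hd _ hsv
          rw [hS, mem_singleton] at hd
          subst hd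
          rw [redI_src_inl, hfsrc] at hsv
          exact hv hsv.symm
        · intro d hd hsv
          rw [hT, mem_singleton] at hd
          subst hd
          rw [redI_src_inl] at hsv
          exact hv hsv.symm
      · intro v hv
        rw [mem_insert, mem_singleton] at hv
        push_neg at hv
        symm
        apply I.redI.mW_update
        · intro d hd _ hsv
          rw [hS, mem_singleton] at hd
          subst hd
          rw [redI_dst_inl] at hsv
          exact hv.2 hsv.symm
        · intro d hd hsv
          rw [hT, mem_singleton] at hd
          subst hd
          rw [redI_dst_inl] at hsv
          exact hv.1 hsv.symm
      · rw [Finset.sum_singleton, Finset.sum_insert (by simpa using hdstfne.symm), Finset.sum_singleton]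
        have hb1 := I.redI.wVoteW_le_one M' N (Sum.inl (I.dst f))
        rw [vU, vW]
        linarith
    · -- `dst e` matched to `g` in `M0`
      obtain ⟨hgM0, hgdst⟩ := I.mW_mem hmj
      rw [hmj] at hbW
      have hWlt : I.pW (I.dst e) g < I.pW (I.dst e) e := hbW
      by_cases hgf : g = f
      · -- Case 1b : `f = g`
        subst hgf
        set S : Finset (E ⊕ Fin n ⊕ Fin n) := {Sum.inl g} with hS
        set T : Finset (E ⊕ Fin n ⊕ Fin n) := {Sum.inl e} with hT
        set N := (M' \ S) ∪ T with hN
        have hTS : ∀ t ∈ T, ∀ d ∈ M', d ∉ S →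
            I.redI.src d ≠ I.redI.src t ∧ I.redI.dst d ≠ I.redI.dst t := by
          intro t ht d hd hdS
          rw [hT, mem_singleton] at ht
          subst ht
          constructor
          · intro hs
            rw [redI_src_inl] at hs
            have hdg : d = Sum.inl g := I.redI.src_unique hM' hd ((hmem0 g).1 hgM0)
              (by rw [hs, redI_src_inl, hfsrc])
            exact hdS (by rw [hS, hdg, mem_singleton])
          · intro hs
            rw [redI_dst_inl] at hs
            have hdg : d = Sum.inl g := I.redI.dst_unique hM' hd ((hmem0 g).1 hgM0)
              (by rw [hs, redI_dst_inl, hgdst])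
            exact hdS (by rw [hS, hdg, mem_singleton])
        have hNmatch : I.redI.IsMatching N := by
          refine I.redI.matching_update hM' ?_ hTS
          intro a ha b hbm hab
          rw [hT, mem_singleton] at ha hbm
          exact absurd (ha.trans hbm.symm) hab
        have hMi : I.redI.mU M' (Sum.inl (I.src e)) = some (Sum.inl g) := hlinkU hmi
        have hNi : I.redI.mU N (Sum.inl (I.src e)) = some (Sum.inl e) :=
          I.redI.mU_eq_some hNmatch (mem_union_right _ (by rw [hT, mem_singleton])) (redI_src_inl I e)
        have hMj : I.redI.mW M' (Sum.inl (I.dst e)) = some (Sum.inl g) := hlinkW hmj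
        have hNj : I.redI.mW N (Sum.inl (I.dst e)) = some (Sum.inl e) :=
          I.redI.mW_eq_some hNmatch (mem_union_right _ (by rw [hT, mem_singleton])) (redI_dst_inl I e)
        have vU : I.redI.wVoteU M' N (Sum.inl (I.src e)) = -1 := by
          apply wVoteU_eq_neg_one
          rw [hMi, hNi, valU_some, valU_some, redI_pU_inl, redI_pU_inl]
          exact hUlt
        have vW : I.redI.wVoteW M' N (Sum.inl (I.dst e)) = -1 := by
          apply wVoteW_eq_neg_one
          rw [hMj, hNj, valW_some, valW_some, redI_pW_inl, redI_pW_inl]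
          exact hWlt
        refine I.redI.popular_contra hpop hNmatch
          {Sum.inl (I.src e)} {Sum.inl (I.dst e)} ?_ ?_ ?_
        · intro v hv
          rw [mem_singleton] at hv
          symm
          apply I.redI.mU_update
          · intro d hd _ hsv
            rw [hS, mem_singleton] at hd
            subst hd
            rw [redI_src_inl, hfsrc] at hsv
            exact hv hsv.symm
          · intro d hd hsv
            rw [hT, mem_singleton] at hd
            subst hd
            rw [redI_src_inl] at hsv
            exact hv hsv.symm
        · intro v hv
          rw [mem_singleton] at hv
          symm
          apply I.redI.mW_update
          · intro d hd _ hsv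
            rw [hS, mem_singleton] at hd
            subst hd
            rw [redI_dst_inl, hgdst] at hsv
            exact hv hsv.symm
          · intro d hd hsv
            rw [hT, mem_singleton] at hd
            subst hd
            rw [redI_dst_inl] at hsv
            exact hv hsv.symm
        · rw [Finset.sum_singleton, Finset.sum_singleton, vU, vW]
          norm_num
      · -- Case 1a : `g ≠ f`
        have hgM' : (Sum.inl g : E ⊕ Fin n ⊕ Fin n) ∈ M' := (hmem0 g).1 hgM0
        have hfM' : (Sum.inl f : E ⊕ Fin n ⊕ Fin n) ∈ M' := (hmem0 f).1 hfM0
        have hkne : I.src g ≠ I.src e := by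
          intro h
          have h2 : I.mU M0 (I.src e) = some g := I.mU_eq_some hM0match hgM0 h
          rw [hmi] at h2
          exact hgf (Option.some_inj.1 h2).symm
        have hdstfne : I.dst f ≠ I.dst e := by
          intro h
          have h2 : I.mW M0 (I.dst e) = some f := I.mW_eq_some hM0match hfM0 h
          rw [hmj] at h2
          exact hgf (Option.some_inj.1 h2)
        have hzkM' : (Sum.inr (Sum.inl (I.src g)) : E ⊕ Fin n ⊕ Fin n) ∉ M' := by
          intro h
          have h2 := I.redI.src_unique hM' h hgM' (by rw [redI_src_zi, redI_src_inl])
          exact absurd h2 (by simp)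
        set S : Finset (E ⊕ Fin n ⊕ Fin n) :=
          {Sum.inl f, Sum.inl g, Sum.inr (Sum.inr (I.src g))} with hS
        set T : Finset (E ⊕ Fin n ⊕ Fin n) :=
          {Sum.inl e, Sum.inr (Sum.inl (I.src g))} with hT
        set N := (M' \ S) ∪ T with hN
        have hTmatch : I.redI.IsMatching T := by
          intro a ha b hbm hab
          rw [hT, mem_insert, mem_singleton] at ha hbm
          rcases ha with rfl | rfl <;> rcases hbm with rfl | rfl
          · exact absurd rfl hab
          · refine ⟨?_, by simp [redI_dst_inl, redI_dst_zi]⟩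
            rw [redI_src_inl, redI_src_zi]
            simp only [ne_eq, Sum.inl.injEq]
            exact fun h => hkne h.symm
          · refine ⟨?_, by simp [redI_dst_inl, redI_dst_zi]⟩
            rw [redI_src_inl, redI_src_zi]
            simp only [ne_eq, Sum.inl.injEq]
            exact hkne
          · exact absurd rfl hab
        have hTS : ∀ t ∈ T, ∀ d ∈ M', d ∉ S →
            I.redI.src d ≠ I.redI.src t ∧ I.redI.dst d ≠ I.redI.dst t := by
          intro t ht d hd hdS
          rw [hT, mem_insert, mem_singleton] at ht
          rcases ht with rfl | rfl
          · constructor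
            · intro hs
              rw [redI_src_inl] at hs
              have hdf : d = Sum.inl f := I.redI.src_unique hM' hd hfM'
                (by rw [hs, redI_src_inl, hfsrc])
              exact hdS (by rw [hS, hdf]; simp)
            · intro hs
              rw [redI_dst_inl] at hs
              have hdg : d = Sum.inl g := I.redI.dst_unique hM' hd hgM'
                (by rw [hs, redI_dst_inl, hgdst])
              exact hdS (by rw [hS, hdg]; simp)
          · constructor
            · intro hs
              rw [redI_src_zi] at hs
              have hdg : d = Sum.inl g := I.redI.src_unique hM' hd hgM'
                (by rw [hs, redI_src_inl])
              exact hdS (by rw [hS, hdg]; simp)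
            · intro hs
              rw [redI_dst_zi] at hs
              rcases I.redI_dst_eq_inr hs with rfl | rfl
              · exact hzkM' hd
              · exact hdS (by rw [hS]; simp)
        have hNmatch : I.redI.IsMatching N := I.redI.matching_update hM' hTmatch hTS
        have hMi : I.redI.mU M' (Sum.inl (I.src e)) = some (Sum.inl f) := hlinkU hmi
        have hNi : I.redI.mU N (Sum.inl (I.src e)) = some (Sum.inl e) :=
          I.redI.mU_eq_some hNmatch (mem_union_right _ (by rw [hT]; simp)) (redI_src_inl I e)
        have hMj : I.redI.mW M' (Sum.inl (I.dst e)) = some (Sum.inl g) := hlinkW hmj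
        have hNj : I.redI.mW N (Sum.inl (I.dst e)) = some (Sum.inl e) :=
          I.redI.mW_eq_some hNmatch (mem_union_right _ (by rw [hT]; simp)) (redI_dst_inl I e)
        have hMk : I.redI.mU M' (Sum.inl (I.src g)) = some (Sum.inl g) :=
          hlinkU (I.mU_eq_some hM0match hgM0 rfl)
        have hNk : I.redI.mU N (Sum.inl (I.src g)) = some (Sum.inr (Sum.inl (I.src g))) :=
          I.redI.mU_eq_some hNmatch (mem_union_right _ (by rw [hT]; simp)) (redI_src_zi I _)
        have hNzk : I.redI.mW N (Sum.inr (I.src g)) = some (Sum.inr (Sum.inl (I.src g))) :=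
          I.redI.mW_eq_some hNmatch (mem_union_right _ (by rw [hT]; simp)) (redI_dst_zi I _)
        have vU : I.redI.wVoteU M' N (Sum.inl (I.src e)) = -1 := by
          apply wVoteU_eq_neg_one
          rw [hMi, hNi, valU_some, valU_some, redI_pU_inl, redI_pU_inl]
          exact hUlt
        have vW : I.redI.wVoteW M' N (Sum.inl (I.dst e)) = -1 := by
          apply wVoteW_eq_neg_one
          rw [hMj, hNj, valW_some, valW_some, redI_pW_inl, redI_pW_inl]
          exact hWlt
        have vUk : I.redI.wVoteU M' N (Sum.inl (I.src g)) = -1 := by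
          apply wVoteU_eq_neg_one
          rw [hMk, hNk, valU_some, valU_some, redI_pU_inl, redI_pU_top]
          have := Finset.single_le_sum (f := fun x => I.pU (I.src g) x)
            (fun x _ => hpU (I.src g) x) (mem_univ g)
          linarith
        have vZk : I.redI.wVoteW M' N (Sum.inr (I.src g)) = -1 := by
          apply wVoteW_eq_neg_one
          rw [hNzk, valW_some, redI_pW_z2]
          rcases hzk : I.redI.mW M' (Sum.inr (I.src g)) with _ | d
          · rw [valW_none]; norm_num
          · obtain ⟨hdM, hdd⟩ := I.redI.mW_mem hzk
            rcases I.redI_dst_eq_inr hdd with rfl | rfl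
            · exact absurd hdM hzkM'
            · rw [valW_some, redI_pW_z1]; norm_num
        refine I.redI.popular_contra hpop hNmatch
          {Sum.inl (I.src e), Sum.inl (I.src g), Sum.inr (I.src g)}
          {Sum.inl (I.dst e), Sum.inl (I.dst f), Sum.inr (I.src g)} ?_ ?_ ?_
        · intro v hv
          symm
          apply I.redI.mU_update
          · intro d hd _ hsv
            rw [hS, mem_insert, mem_insert, mem_singleton] at hd
            rcases hd with rfl | rfl | rfl
            · rw [redI_src_inl, hfsrc] at hsv
              exact hv (by rw [← hsv]; simp)
            · rw [redI_src_inl] at hsv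
              exact hv (by rw [← hsv]; simp)
            · rw [redI_src_zi'] at hsv
              exact hv (by rw [← hsv]; simp)
          · intro d hd hsv
            rw [hT, mem_insert, mem_singleton] at hd
            rcases hd with rfl | rfl
            · rw [redI_src_inl] at hsv
              exact hv (by rw [← hsv]; simp)
            · rw [redI_src_zi] at hsv
              exact hv (by rw [← hsv]; simp)
        · intro v hv
          symm
          apply I.redI.mW_update
          · intro d hd _ hsv
            rw [hS, mem_insert, mem_insert, mem_singleton] at hd
            rcases hd with rfl | rfl | rfl
            · rw [redI_dst_inl] at hsv
              exact hv (by rw [← hsv]; simp)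
            · rw [redI_dst_inl, hgdst] at hsv
              exact hv (by rw [← hsv]; simp)
            · rw [redI_dst_zi'] at hsv
              exact hv (by rw [← hsv]; simp)
          · intro d hd hsv
            rw [hT, mem_insert, mem_singleton] at hd
            rcases hd with rfl | rfl
            · rw [redI_dst_inl] at hsv
              exact hv (by rw [← hsv]; simp)
            · rw [redI_dst_zi] at hsv
              exact hv (by rw [← hsv]; simp)
        · rw [Finset.sum_insert (by simp; exact fun h => hkne h.symm),
            Finset.sum_insert (by simp), Finset.sum_singleton,
            Finset.sum_insert (by simp; exact hdstfne.symm),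
            Finset.sum_insert (by simp), Finset.sum_singleton]
          have hb1 := I.redI.wVoteU_le_one M' N (Sum.inr (I.src g))
          have hb2 := I.redI.wVoteW_le_one M' N (Sum.inl (I.dst f))
          rw [vU, vUk, vW, vZk]
          linarith
  have hJfree : I.mW M0 (I.dst e) = none := by
    rcases hmj : I.mW M0 (I.dst e) with _ | g
    · rfl
    exfalso
    obtain ⟨hgM0, hgdst⟩ := I.mW_mem hmj
    rw [hmj] at hbW
    have hWlt : I.pW (I.dst e) g < I.pW (I.dst e) e := hbW
    have hgM' : (Sum.inl g : E ⊕ Fin n ⊕ Fin n) ∈ M' := (hmem0 g).1 hgM0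
    have hki : I.src g ≠ I.src e := by
      intro h
      have h2 : I.mU M0 (I.src e) = some g := I.mU_eq_some hM0match hgM0 h
      rw [hIfree] at h2
      exact nomatch h2
    have hzkM' : (Sum.inr (Sum.inl (I.src g)) : E ⊕ Fin n ⊕ Fin n) ∉ M' := by
      intro h
      have h2 := I.redI.src_unique hM' h hgM' (by rw [redI_src_zi, redI_src_inl])
      exact absurd h2 (by simp)
    by_cases hzi : (Sum.inr (Sum.inl (I.src e)) : E ⊕ Fin n ⊕ Fin n) ∈ M'
    · -- Case 2a : `u_i` is matched to `z_i` in `M'`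
      have hziM'2 : (Sum.inr (Sum.inr (I.src e)) : E ⊕ Fin n ⊕ Fin n) ∉ M' := by
        intro h
        have h2 := I.redI.dst_unique hM' h hzi (by rw [redI_dst_zi', redI_dst_zi])
        exact absurd h2 (by simp)
      set S : Finset (E ⊕ Fin n ⊕ Fin n) :=
        {Sum.inr (Sum.inl (I.src e)), Sum.inl g, Sum.inr (Sum.inr (I.src g))} with hS
      set T : Finset (E ⊕ Fin n ⊕ Fin n) :=
        {Sum.inl e, Sum.inr (Sum.inr (I.src e)), Sum.inr (Sum.inl (I.src g))} with hT
      set N := (M' \ S) ∪ T with hN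
      have hTmatch : I.redI.IsMatching T := by
        intro a ha b hbm hab
        rw [hT, mem_insert, mem_insert, mem_singleton] at ha hbm
        rcases ha with rfl | rfl | rfl <;> rcases hbm with rfl | rfl | rfl
        · exact absurd rfl hab
        · exact ⟨by simp [redI_src_inl, redI_src_zi'], by simp [redI_dst_inl, redI_dst_zi']⟩
        · refine ⟨?_, by simp [redI_dst_inl, redI_dst_zi]⟩
          rw [redI_src_inl, redI_src_zi]
          simp only [ne_eq, Sum.inl.injEq]
          exact fun h => hki h.symm
        · exact ⟨by simp [redI_src_inl, redI_src_zi'], by simp [redI_dst_inl, redI_dst_zi']⟩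
        · exact absurd rfl hab
        · refine ⟨by simp [redI_src_zi, redI_src_zi'], ?_⟩
          rw [redI_dst_zi', redI_dst_zi]
          simp only [ne_eq, Sum.inr.injEq]
          exact fun h => hki h.symm
        · refine ⟨?_, by simp [redI_dst_inl, redI_dst_zi]⟩
          rw [redI_src_inl, redI_src_zi]
          simp only [ne_eq, Sum.inl.injEq]
          exact hki
        · refine ⟨by simp [redI_src_zi, redI_src_zi'], ?_⟩
          rw [redI_dst_zi', redI_dst_zi]
          simp only [ne_eq, Sum.inr.injEq]
          exact hki
        · exact absurd rfl hab
      have hTS : ∀ t ∈ T, ∀ d ∈ M', d ∉ S →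
          I.redI.src d ≠ I.redI.src t ∧ I.redI.dst d ≠ I.redI.dst t := by
        intro t ht d hd hdS
        rw [hT, mem_insert, mem_insert, mem_singleton] at ht
        rcases ht with rfl | rfl | rfl
        · constructor
          · intro hs
            rw [redI_src_inl] at hs
            have hdz := hnoneU hIfree d hd hs
            exact hdS (by rw [hS, hdz]; simp)
          · intro hs
            rw [redI_dst_inl] at hs
            have hdg : d = Sum.inl g := I.redI.dst_unique hM' hd hgM'
              (by rw [hs, redI_dst_inl, hgdst])
            exact hdS (by rw [hS, hdg]; simp)
        · constructor
          · intro hs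
            rw [redI_src_zi'] at hs
            have hdz := I.redI_src_eq_inr hs
            rw [hdz] at hd
            exact hziM'2 hd
          · intro hs
            rw [redI_dst_zi'] at hs
            rcases I.redI_dst_eq_inr hs with rfl | rfl
            · exact hdS (by rw [hS]; simp)
            · exact hziM'2 hd
        · constructor
          · intro hs
            rw [redI_src_zi] at hs
            have hdg : d = Sum.inl g := I.redI.src_unique hM' hd hgM'
              (by rw [hs, redI_src_inl])
            exact hdS (by rw [hS, hdg]; simp)
          · intro hs
            rw [redI_dst_zi] at hs
            rcases I.redI_dst_eq_inr hs with rfl | rfl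
            · exact hzkM' hd
            · exact hdS (by rw [hS]; simp)
      have hNmatch : I.redI.IsMatching N := I.redI.matching_update hM' hTmatch hTS
      have hMzi' : I.redI.mU M' (Sum.inr (I.src e)) = none := by
        apply mU_eq_none
        intro d hd hs
        have hdz := redI_src_eq_inr I hs
        rw [hdz] at hd
        exact hziM'2 hd
      have hNzi' : I.redI.mU N (Sum.inr (I.src e)) = some (Sum.inr (Sum.inr (I.src e))) :=
        I.redI.mU_eq_some hNmatch (mem_union_right _ (by rw [hT]; simp)) (redI_src_zi' I _)
      have hMj : I.redI.mW M' (Sum.inl (I.dst e)) = some (Sum.inl g) := hlinkW hmj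
      have hNj : I.redI.mW N (Sum.inl (I.dst e)) = some (Sum.inl e) :=
        I.redI.mW_eq_some hNmatch (mem_union_right _ (by rw [hT]; simp)) (redI_dst_inl I e)
      have hMk : I.redI.mU M' (Sum.inl (I.src g)) = some (Sum.inl g) :=
        hlinkU (I.mU_eq_some hM0match hgM0 rfl)
      have hNk : I.redI.mU N (Sum.inl (I.src g)) = some (Sum.inr (Sum.inl (I.src g))) :=
        I.redI.mU_eq_some hNmatch (mem_union_right _ (by rw [hT]; simp)) (redI_src_zi I _)
      have hNzk : I.redI.mW N (Sum.inr (I.src g)) = some (Sum.inr (Sum.inl (I.src g))) :=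
        I.redI.mW_eq_some hNmatch (mem_union_right _ (by rw [hT]; simp)) (redI_dst_zi I _)
      have vZi' : I.redI.wVoteU M' N (Sum.inr (I.src e)) = -1 := by
        apply wVoteU_eq_neg_one
        rw [hMzi', hNzi', valU_none, valU_some, redI_pU_z]
        norm_num
      have vW : I.redI.wVoteW M' N (Sum.inl (I.dst e)) = -1 := by
        apply wVoteW_eq_neg_one
        rw [hMj, hNj, valW_some, valW_some, redI_pW_inl, redI_pW_inl]
        exact hWlt
      have vUk : I.redI.wVoteU M' N (Sum.inl (I.src g)) = -1 := by
        apply wVoteU_eq_neg_one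
        rw [hMk, hNk, valU_some, valU_some, redI_pU_inl, redI_pU_top]
        have := Finset.single_le_sum (f := fun x => I.pU (I.src g) x)
          (fun x _ => hpU (I.src g) x) (mem_univ g)
        linarith
      have vZk : I.redI.wVoteW M' N (Sum.inr (I.src g)) = -1 := by
        apply wVoteW_eq_neg_one
        rw [hNzk, valW_some, redI_pW_z2]
        rcases hzk : I.redI.mW M' (Sum.inr (I.src g)) with _ | d
        · rw [valW_none]; norm_num
        · obtain ⟨hdM, hdd⟩ := I.redI.mW_mem hzk
          rcases I.redI_dst_eq_inr hdd with rfl | rfl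
          · exact absurd hdM hzkM'
          · rw [valW_some, redI_pW_z1]; norm_num
      refine I.redI.popular_contra hpop hNmatch
        {Sum.inl (I.src e), Sum.inr (I.src e), Sum.inl (I.src g), Sum.inr (I.src g)}
        {Sum.inr (I.src e), Sum.inl (I.dst e), Sum.inr (I.src g)} ?_ ?_ ?_
      · intro v hv
        symm
        apply I.redI.mU_update
        · intro d hd _ hsv
          rw [hS, mem_insert, mem_insert, mem_singleton] at hd
          rcases hd with rfl | rfl | rfl
          · rw [redI_src_zi] at hsv
            exact hv (by rw [← hsv]; simp)
          · rw [redI_src_inl] at hsv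
            exact hv (by rw [← hsv]; simp)
          · rw [redI_src_zi'] at hsv
            exact hv (by rw [← hsv]; simp)
        · intro d hd hsv
          rw [hT, mem_insert, mem_insert, mem_singleton] at hd
          rcases hd with rfl | rfl | rfl
          · rw [redI_src_inl] at hsv
            exact hv (by rw [← hsv]; simp)
          · rw [redI_src_zi'] at hsv
            exact hv (by rw [← hsv]; simp)
          · rw [redI_src_zi] at hsv
            exact hv (by rw [← hsv]; simp)
      · intro v hv
        symm
        apply I.redI.mW_update
        · intro d hd _ hsv
          rw [hS, mem_insert, mem_insert, mem_singleton] at hd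
          rcases hd with rfl | rfl | rfl
          · rw [redI_dst_zi] at hsv
            exact hv (by rw [← hsv]; simp)
          · rw [redI_dst_inl, hgdst] at hsv
            exact hv (by rw [← hsv]; simp)
          · rw [redI_dst_zi'] at hsv
            exact hv (by rw [← hsv]; simp)
        · intro d hd hsv
          rw [hT, mem_insert, mem_insert, mem_singleton] at hd
          rcases hd with rfl | rfl | rfl
          · rw [redI_dst_inl] at hsv
            exact hv (by rw [← hsv]; simp)
          · rw [redI_dst_zi'] at hsv
            exact hv (by rw [← hsv]; simp)
          · rw [redI_dst_zi] at hsv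
            exact hv (by rw [← hsv]; simp)
      · rw [Finset.sum_insert (by simp; exact fun h => hki h.symm),
          Finset.sum_insert (by simp; exact fun h => hki h.symm),
          Finset.sum_insert (by simp), Finset.sum_singleton,
          Finset.sum_insert (by simp; exact fun h => hki h.symm),
          Finset.sum_insert (by simp), Finset.sum_singleton]
        have hb1 := I.redI.wVoteU_le_one M' N (Sum.inl (I.src e))
        have hb2 := I.redI.wVoteU_le_one M' N (Sum.inr (I.src g))
        have hb3 := I.redI.wVoteW_le_one M' N (Sum.inr (I.src e))
        rw [vZi', vUk, vW, vZk]
        linarith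
    · -- Case 2b : `u_i` is fully unmatched in `M'`
      set S : Finset (E ⊕ Fin n ⊕ Fin n) := {Sum.inr (Sum.inr (I.src e))} with hS
      set T : Finset (E ⊕ Fin n ⊕ Fin n) := {Sum.inr (Sum.inl (I.src e))} with hT
      set N := (M' \ S) ∪ T with hN
      have hTS : ∀ t ∈ T, ∀ d ∈ M', d ∉ S →
          I.redI.src d ≠ I.redI.src t ∧ I.redI.dst d ≠ I.redI.dst t := by
        intro t ht d hd hdS
        rw [hT, mem_singleton] at ht
        subst ht
        constructor
        · intro hs
          rw [redI_src_zi] at hs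
          have hdz := hnoneU hIfree d hd hs
          rw [hdz] at hd
          exact hzi hd
        · intro hs
          rw [redI_dst_zi] at hs
          rcases I.redI_dst_eq_inr hs with rfl | rfl
          · exact hzi hd
          · exact hdS (by rw [hS]; simp)
      have hNmatch : I.redI.IsMatching N := by
        refine I.redI.matching_update hM' ?_ hTS
        intro a ha b hbm hab
        rw [hT, mem_singleton] at ha hbm
        exact absurd (ha.trans hbm.symm) hab
      have hMi : I.redI.mU M' (Sum.inl (I.src e)) = none := by
        apply mU_eq_none
        intro d hd hs
        have hdz := hnoneU hIfree d hd hs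
        rw [hdz] at hd
        exact hzi hd
      have hNi : I.redI.mU N (Sum.inl (I.src e)) = some (Sum.inr (Sum.inl (I.src e))) :=
        I.redI.mU_eq_some hNmatch (mem_union_right _ (by rw [hT]; simp)) (redI_src_zi I _)
      have hNzi : I.redI.mW N (Sum.inr (I.src e)) = some (Sum.inr (Sum.inl (I.src e))) :=
        I.redI.mW_eq_some hNmatch (mem_union_right _ (by rw [hT]; simp)) (redI_dst_zi I _)
      have vUi : I.redI.wVoteU M' N (Sum.inl (I.src e)) = -1 := by
        apply wVoteU_eq_neg_one
        rw [hMi, hNi, valU_none, valU_some, redI_pU_top]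
        have : 0 ≤ ∑ x, I.pU (I.src e) x := Finset.sum_nonneg (fun x _ => hpU (I.src e) x)
        linarith
      have vZi : I.redI.wVoteW M' N (Sum.inr (I.src e)) = -1 := by
        apply wVoteW_eq_neg_one
        rw [hNzi, valW_some, redI_pW_z2]
        rcases hzk : I.redI.mW M' (Sum.inr (I.src e)) with _ | d
        · rw [valW_none]; norm_num
        · obtain ⟨hdM, hdd⟩ := I.redI.mW_mem hzk
          rcases I.redI_dst_eq_inr hdd with rfl | rfl
          · exact absurd hdM hzi
          · rw [valW_some, redI_pW_z1]; norm_num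
      refine I.redI.popular_contra hpop hNmatch
        {Sum.inl (I.src e), Sum.inr (I.src e)} {Sum.inr (I.src e)} ?_ ?_ ?_
      · intro v hv
        symm
        apply I.redI.mU_update
        · intro d hd _ hsv
          rw [hS, mem_singleton] at hd
          subst hd
          rw [redI_src_zi'] at hsv
          exact hv (by rw [← hsv]; simp)
        · intro d hd hsv
          rw [hT, mem_singleton] at hd
          subst hd
          rw [redI_src_zi] at hsv
          exact hv (by rw [← hsv]; simp)
      · intro v hv
        symm
        apply I.redI.mW_update
        · intro d hd _ hsv
          rw [hS, mem_singleton] at hd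
          subst hd
          rw [redI_dst_zi'] at hsv
          exact hv (by rw [← hsv]; simp)
        · intro d hd hsv
          rw [hT, mem_singleton] at hd
          subst hd
          rw [redI_dst_zi] at hsv
          exact hv (by rw [← hsv]; simp)
      · rw [Finset.sum_insert (by simp), Finset.sum_singleton, Finset.sum_singleton]
        have hb1 := I.redI.wVoteU_le_one M' N (Sum.inr (I.src e))
        rw [vUi, vZi]
        linarith
  exact ⟨hIfree, hJfree⟩

end Key

end PrefInst

open PrefInst in
/-- If `M'` is a weakly popular matching in the reduction instance
`I'` of size `2n − l` (where `l ≤ n`), then the original SMTI instance `I`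
(ties on side `W` only, i.e. strict U-side preferences) admits a weakly stable
matching of size at least `n − l`. -/
theorem redI_weakly_popular_gives_stable
    {E : Type} [DecidableEq E] [Fintype E] {n : ℕ}
    (I : PrefInst (Fin n) (Fin n) E)
    (hpU : ∀ u e, 0 ≤ I.pU u e) (hpW : ∀ w e, 0 ≤ I.pW w e)
    (hstrictU : ∀ u e f, I.src e = u → I.src f = u → I.pU u e = I.pU u f → e = f)
    (l : ℕ) (hl : l ≤ n)
    (M' : Finset (E ⊕ Fin n ⊕ Fin n))
    (hM' : I.redI.IsMatching M')
    (hpop : I.redI.WeaklyPopular M')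
    (hcard : M'.card = 2 * n - l) :
    ∃ M : Finset E, I.IsMatching M ∧ I.WeaklyStable M ∧ n - l ≤ M.card := by
  classical
  set M0 : Finset E := univ.filter (fun f => (Sum.inl f : E ⊕ Fin n ⊕ Fin n) ∈ M') with hM0def
  have hmem0 : ∀ f : E, f ∈ M0 ↔ (Sum.inl f : E ⊕ Fin n ⊕ Fin n) ∈ M' := by
    intro f; simp [hM0def]
  have hM0match : I.IsMatching M0 := by
    intro a ha b hbm hab
    have h := hM' (Sum.inl a) ((hmem0 a).1 ha) (Sum.inl b) ((hmem0 b).1 hbm) (by simpa using hab)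
    refine ⟨fun hs => h.1 ?_, fun hs => h.2 ?_⟩
    · rw [redI_src_inl, redI_src_inl, hs]
    · rw [redI_dst_inl, redI_dst_inl, hs]
  -- cardinality: `M0` has at least `n - l` edges
  have hcard0 : n - l ≤ M0.card := by
    have hsplit := Finset.card_filter_add_card_filter_not
      (s := M') (p := fun d => d.isLeft = true)
    have himg : M'.filter (fun d => d.isLeft = true) = M0.image Sum.inl := by
      ext d
      rcases d with f | k | k
      · simp [hmem0, Sum.inl_injective.eq_iff]
      · simp
      · simp
    have hc1 : (M'.filter (fun d => d.isLeft = true)).card = M0.card := by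
      rw [himg, Finset.card_image_of_injective _ Sum.inl_injective]
    have hc2 : ∀ s : Finset (E ⊕ Fin n ⊕ Fin n), s ⊆ M' →
        (∀ d ∈ s, ¬ d.isLeft = true) → s.card ≤ n := by
      intro s hsub hnl
      have hinj : Set.InjOn I.redI.dst s := by
        intro a ha b hb h
        exact I.redI.dst_unique hM' (hsub ha) (hsub hb) h
      have hc2im : (s.image I.redI.dst).card = s.card :=
        Finset.card_image_of_injOn hinj
      have hsubim : s.image I.redI.dst ⊆ (univ : Finset (Fin n)).image Sum.inr := by
        intro v hv
        obtain ⟨d, hd, rfl⟩ := Finset.mem_image.1 hv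
        rcases d with f | k | k
        · exact absurd rfl (hnl _ hd)
        · rw [redI_dst_zi]
          exact Finset.mem_image.2 ⟨k, mem_univ _, rfl⟩
        · rw [redI_dst_zi']
          exact Finset.mem_image.2 ⟨k, mem_univ _, rfl⟩
      have := Finset.card_le_card hsubim
      rw [hc2im] at this
      rwa [Finset.card_image_of_injective _ Sum.inr_injective, card_univ,
        Fintype.card_fin] at this
    have hc2' := hc2 _ (Finset.filter_subset _ M') (fun d hd => (Finset.mem_filter.1 hd).2)
    omega
  -- the sub-instance on vertices unmatched in `M0`
  set A : Finset E := univ.filter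
    (fun f => I.mU M0 (I.src f) = none ∧ I.mW M0 (I.dst f) = none) with hA
  obtain ⟨MA, hMAA, hMAmatch, hMAnb⟩ := I.exists_weaklyStable_on A
    (by
      intro a _ b _ hsab hp
      exact hstrictU (I.src a) a b rfl hsab.symm (by rw [hp, hsab]))
  have hMAfree : ∀ f ∈ MA, I.mU M0 (I.src f) = none ∧ I.mW M0 (I.dst f) = none :=
    fun f hf => (mem_filter.1 (hMAA hf)).2
  set M : Finset E := M0 ∪ MA with hM
  have hMmatch : I.IsMatching M := by
    intro a ha b hbm hab
    rw [hM, mem_union] at ha hbm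
    constructor
    · intro hsab
      rcases ha with ha | ha <;> rcases hbm with hbm | hbm
      · exact (hM0match a ha b hbm hab).1 hsab
      · have h1 := (hMAfree b hbm).1
        have h2 : I.mU M0 (I.src b) = some a := I.mU_eq_some hM0match ha hsab
        rw [h1] at h2; exact nomatch h2
      · have h1 := (hMAfree a ha).1
        have h2 : I.mU M0 (I.src a) = some b := I.mU_eq_some hM0match hbm hsab.symm
        rw [h1] at h2; exact nomatch h2
      · exact (hMAmatch a ha b hbm hab).1 hsab
    · intro hsab
      rcases ha with ha | ha <;> rcases hbm with hbm | hbm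
      · exact (hM0match a ha b hbm hab).2 hsab
      · have h1 := (hMAfree b hbm).2
        have h2 : I.mW M0 (I.dst b) = some a := I.mW_eq_some hM0match ha hsab
        rw [h1] at h2; exact nomatch h2
      · have h1 := (hMAfree a ha).2
        have h2 : I.mW M0 (I.dst a) = some b := I.mW_eq_some hM0match hbm hsab.symm
        rw [h1] at h2; exact nomatch h2
      · exact (hMAmatch a ha b hbm hab).2 hsab
  -- partner coherence
  have hmUfree : ∀ u, I.mU M0 u = none → I.mU M u = I.mU MA u := by
    intro u h
    apply mU_congr
    ext d
    simp only [hM, mem_filter, mem_union]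
    constructor
    · rintro ⟨hd | hd, hdu⟩
      · have h2 : I.mU M0 u = some d := I.mU_eq_some hM0match hd hdu
        rw [h] at h2; exact nomatch h2
      · exact ⟨hd, hdu⟩
    · rintro ⟨hd, hdu⟩; exact ⟨Or.inr hd, hdu⟩
  have hmWfree : ∀ w, I.mW M0 w = none → I.mW M w = I.mW MA w := by
    intro w h
    apply mW_congr
    ext d
    simp only [hM, mem_filter, mem_union]
    constructor
    · rintro ⟨hd | hd, hdu⟩
      · have h2 : I.mW M0 w = some d := I.mW_eq_some hM0match hd hdu
        rw [h] at h2; exact nomatch h2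
      · exact ⟨hd, hdu⟩
    · rintro ⟨hd, hdu⟩; exact ⟨Or.inr hd, hdu⟩
  have hmUmat : ∀ u d, I.mU M0 u = some d → I.mU M u = some d := by
    intro u d h
    obtain ⟨hd, hdu⟩ := I.mU_mem h
    exact I.mU_eq_some hMmatch (mem_union_left _ hd) hdu
  have hmWmat : ∀ w d, I.mW M0 w = some d → I.mW M w = some d := by
    intro w d h
    obtain ⟨hd, hdu⟩ := I.mW_mem h
    exact I.mW_eq_some hMmatch (mem_union_left _ hd) hdu
  have hvalU0 : ∀ u, 0 ≤ I.valU u (I.mU M u) := by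
    intro u
    rcases h : I.mU M u with _ | d
    · rw [valU_none]
    · rw [valU_some]; exact hpU u d
  have hvalW0 : ∀ w, 0 ≤ I.valW w (I.mW M w) := by
    intro w
    rcases h : I.mW M w with _ | d
    · rw [valW_none]
    · rw [valW_some]; exact hpW w d
  have hstab : I.WeaklyStable M := by
    intro f hbf
    obtain ⟨hfM, hfU, hfW⟩ := hbf
    by_cases hfA : f ∈ A
    · have h1 := (mem_filter.1 hfA).2
      refine hMAnb f hfA ⟨fun h => hfM (mem_union_right _ h), ?_, ?_⟩
      · rw [← hmUfree (I.src f) h1.1]; exact hfU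
      · rw [← hmWfree (I.dst f) h1.2]; exact hfW
    · have hbl0 : I.Blocks M0 f := by
        refine ⟨fun h => hfM (mem_union_left _ h), ?_, ?_⟩
        · rcases h : I.mU M0 (I.src f) with _ | d
          · rw [valU_none]
            have := hvalU0 (I.src f)
            linarith
          · rw [valU_some]
            have h2 := hmUmat _ _ h
            rw [h2, valU_some] at hfU
            exact hfU
        · rcases h : I.mW M0 (I.dst f) with _ | d
          · rw [valW_none]
            have := hvalW0 (I.dst f)
            linarith
          · rw [valW_some]
            have h2 := hmWmat _ _ h
            rw [h2, valW_some] at hfW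
            exact hfW
      have hfree := I.redI_blocks_free hpU M' hM' hpop f hbl0
      exact hfA (mem_filter.2 ⟨mem_univ f, hfree⟩)
  exact ⟨M, hMmatch, hstab, le_trans hcard0 (Finset.card_le_card subset_union_left)⟩
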